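/- For a finite group G, the canonical map from G to the group of monoidal natural automorphisms of the forgetful functor from finite-dimensional k-linear representations of G to finite-dimensional k-vector spaces, sending g to the natural automorphism whose component at a representation (V, ρ) is ρ(g), is an isomorphism of groups (Tannaka duality for finite groups). -/

import Mathlib

open CategoryTheory MonoidalCategory

noncomputable section TannakaAux

namespace TannakaAux

variable {k G : Type} [Field k] [Group G]

/-- The right regular representation of `G` on `G → M`. -/
@[simps]
def rreg (k : Type) [Field k] (G : Type) [Group G] (M : Type) [AddCommGroup M] [Module k M] :
    Representation k G (G → M) where
  toFun g := LinearMap.funLeft k M (· * g)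
  map_one' := by ext f h; simp
  map_mul' g g' := by ext f h; simp [mul_assoc]

variable [Finite G]

instance : Fintype G := Fintype.ofFinite G

/-- The regular representation as an object of `FDRep k G`. -/
def A (k G : Type) [Field k] [Group G] [Finite G] : FDRep k G := FDRep.of (rreg k G k)

/-- The canonical map `G →* Aut (forget)`. -/
def T (k G : Type) [Field k] [Group G] : G →* Aut (Action.forget (FGModuleCat.{0} k) (MonCat.of G)) where
  toFun g := NatIso.ofComponents (fun X => Action.ρAut (G := GrpCat.of G) X g)
    (fun f => (f.comm g).symm)
  map_one' := by
    ext X x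
    simp
    rfl
  map_mul' g h := by
    ext X x
    simp
    rfl

lemma T_app (g : G) (X : FDRep k G) : (T k G g).hom.app X = Action.ρ X g := rfl

lemma T_apply (g : G) (X : FDRep k G) (v : X) : ((T k G g).hom.app X) v = FDRep.ρ X g v := rfl

lemma T_isMonoidal (g : G) : NatTrans.IsMonoidal (T k G g).hom := by
  constructor
  · simp
    ext x
    rfl
  · intro X Y
    simp
    apply FGModuleCat.hom_ext
    apply TensorProduct.ext'
    intro x y
    rfl

lemma T_injective : Function.Injective (T k G) := by
  classical
  intro g g' h
  have h2 : (T k G g).hom.app (A k G) = (T k G g').hom.app (A k G) := by rw [h]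
  have h4 : (fun x => if x = g then (1 : k) else 0) (1 * g)
      = (fun x => if x = g then (1 : k) else 0) (1 * g') :=
    congrFun (ConcreteCategory.congr_hom h2 (fun x => if x = g then (1 : k) else 0)) 1
  simp at h4
  by_contra hne
  exact hne h4.symm

section Surjectivity

variable (k G)

/-- Multiplication on the regular representation, as a morphism in `FDRep k G`. -/
def mulHom : A k G ⊗ A k G ⟶ A k G where
  hom := FGModuleCat.ofHom (LinearMap.mul' k (G → k))
  comm g := by
    apply FGModuleCat.hom_ext
    apply TensorProduct.ext'
    intro f f'
    funext h
    show (LinearMap.mul' k (G → k)) ((TensorProduct.map ((A k G).ρ g) ((A k G).ρ g)) (f ⊗ₜ f')) h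
      = ((A k G).ρ g) ((LinearMap.mul' k (G → k)) (f ⊗ₜ f')) h
    rfl

/-- The algebra unit of the regular representation, as a morphism in `FDRep k G`. -/
def oneHom : 𝟙_ (FDRep k G) ⟶ A k G where
  hom := FGModuleCat.ofHom (LinearMap.pi fun _ : G => LinearMap.id)
  comm g := by
    apply FGModuleCat.hom_ext
    apply LinearMap.ext
    intro c
    funext h
    rfl

/-- Left translation by `h`, as an endomorphism of the regular representation. -/
def lHom (h : G) : A k G ⟶ A k G where
  hom := FGModuleCat.ofHom (LinearMap.funLeft k k (h * ·))
  comm g := by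
    apply FGModuleCat.hom_ext
    apply LinearMap.ext
    intro f
    funext x
    exact congrArg f (mul_assoc h x g)

variable {k G}
variable (τ : Aut (Action.forget (FGModuleCat k) (MonCat.of G)))

lemma nat_apply {X Y : FDRep k G} (f : X ⟶ Y) (v : X) :
    τ.hom.app Y (f.hom v) = f.hom (τ.hom.app X v) :=
  ConcreteCategory.congr_hom (τ.hom.naturality f) v

lemma app_unit_eq_id (hτ : NatTrans.IsMonoidal τ.hom) :
    τ.hom.app (𝟙_ (FDRep k G)) = 𝟙 _ := by
  have := hτ.unit
  exact (Category.id_comp _).symm.trans this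

lemma app_tensor (hτ : NatTrans.IsMonoidal τ.hom) (X Y : FDRep k G) :
    τ.hom.app (X ⊗ Y) = (τ.hom.app X ⊗ₘ τ.hom.app Y) := by
  have := hτ.tensor X Y
  exact (Category.id_comp _).symm.trans (this.trans (Category.comp_id _))

lemma phi_mul (hτ : NatTrans.IsMonoidal τ.hom) (f f' : G → k) (h : G) :
    τ.hom.app (A k G) (f * f') h = τ.hom.app (A k G) f h * τ.hom.app (A k G) f' h := by
  have h1 := nat_apply τ (mulHom k G) (f ⊗ₜ f')
  rw [app_tensor τ hτ] at h1
  have h2 : (mulHom k G).hom (f ⊗ₜ f') = f * f' := rfl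
  rw [h2] at h1
  exact (congrFun h1 h).trans rfl

lemma phi_one (hτ : NatTrans.IsMonoidal τ.hom) :
    τ.hom.app (A k G) (1 : G → k) = (1 : G → k) := by
  have h1 := nat_apply τ (oneHom k G) (1 : k)
  rw [app_unit_eq_id τ hτ] at h1
  exact h1

lemma exists_eval (hτ : NatTrans.IsMonoidal τ.hom) :
    ∃ a : G, ∀ f : G → k, τ.hom.app (A k G) f 1 = f a := by
  classical
  set ψ : (G → k) → k := fun f => τ.hom.app (A k G) f 1 with hψ
  have ψ_mul : ∀ f f', ψ (f * f') = ψ f * ψ f' := fun f f' => phi_mul τ hτ f f' 1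
  have ψ_one : ψ 1 = 1 := congrFun (phi_one τ hτ) 1
  set e : G → (G → k) := fun s h => if h = s then 1 else 0 with he
  have e_mul_self : ∀ s, e s * e s = e s := by
    intro s; funext h; by_cases hh : h = s <;> simp [he, hh]
  have e_sum : ∑ s, e s = 1 := by
    funext h
    simp only [Finset.sum_apply, Pi.one_apply, he]
    rw [Finset.sum_ite_eq Finset.univ h (fun _ => (1 : k))]
    simp
  have ψ_sum : ∑ s, ψ (e s) = 1 := by
    rw [← ψ_one, ← e_sum]
    simp only [hψ]
    exact ((congrFun (map_sum (ConcreteCategory.hom (τ.hom.app (A k G))) e Finset.univ) 1).trans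
      (Finset.sum_apply _ _ _)).symm
  have ψ_idem : ∀ s, ψ (e s) * ψ (e s) = ψ (e s) := by
    intro s; rw [← ψ_mul, e_mul_self]
  obtain ⟨a, ha⟩ : ∃ a : G, ψ (e a) ≠ 0 := by
    by_contra hc
    push_neg at hc
    rw [Finset.sum_eq_zero (fun s _ => hc s)] at ψ_sum
    exact zero_ne_one ψ_sum
  have hψa : ψ (e a) = 1 :=
    mul_left_cancel₀ ha ((ψ_idem a).trans (mul_one _).symm)
  refine ⟨a, fun f => ?_⟩
  have hfe : f * e a = f a • e a := by
    funext h
    by_cases hh : h = a <;> simp [he, hh]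
  have key : ψ (f * e a) = ψ f := by rw [ψ_mul, hψa, mul_one]
  rw [hfe] at key
  have hsmul : ψ (f a • e a) = f a * ψ (e a) := by
    simp only [hψ]
    refine (congrFun (map_smul (ConcreteCategory.hom (τ.hom.app (A k G))) (f a) (e a)) 1).trans ?_
    rfl
  rw [hsmul, hψa, mul_one] at key
  exact key.symm

lemma phi_eval (hτ : NatTrans.IsMonoidal τ.hom) {a : G}
    (ha : ∀ f : G → k, τ.hom.app (A k G) f 1 = f a) (f : G → k) (h : G) :
    τ.hom.app (A k G) f h = f (h * a) := by
  have h1 := nat_apply τ (lHom k G h) f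
  have h2 := congrFun h1 1
  have h3 : ((lHom k G h).hom (τ.hom.app (A k G) f) : G → k) 1 = τ.hom.app (A k G) f h := by
    show (τ.hom.app (A k G) f : G → k) (h * 1) = _
    rw [mul_one]
  rw [h3] at h2
  rw [ha ((lHom k G h).hom f)] at h2
  have h4 : ((lHom k G h).hom f : G → k) a = f (h * a) := rfl
  rw [h4] at h2
  exact h2.symm

variable (k G) in
/-- Evaluation of functions along a linear functional, as a morphism of representations. -/
def plHom {M : Type} [AddCommGroup M] [Module k M] [FiniteDimensional k M]
    (l : M →ₗ[k] k) : FDRep.of (rreg k G M) ⟶ A k G where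
  hom := FGModuleCat.ofHom (l.compLeft G)
  comm g := by
    apply FGModuleCat.hom_ext
    apply LinearMap.ext
    intro f
    funext x
    rfl

lemma key_eval (hτ : NatTrans.IsMonoidal τ.hom) {a : G}
    (ha : ∀ f : G → k, τ.hom.app (A k G) f 1 = f a) (X : FDRep k G) (v : X) :
    τ.hom.app X v = FDRep.ρ X a v := by
  classical
  let Y : FDRep k G := FDRep.of (rreg k G X)
  let u : X ⟶ Y :=
    { hom := FGModuleCat.ofHom
        { toFun := fun w => fun h => FDRep.ρ X h w
          map_add' := fun w w' => funext fun h => map_add (FDRep.ρ X h) w w'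
          map_smul' := fun c w => funext fun h => map_smul (FDRep.ρ X h) c w }
      comm := fun g => by
        apply FGModuleCat.hom_ext
        apply LinearMap.ext
        intro w
        funext h
        exact (LinearMap.congr_fun ((FDRep.ρ X).map_mul h g) w).symm }
  have hY : ∀ (f : G → (X : Type)) (h : G), (τ.hom.app Y f : G → (X : Type)) h = f (h * a) := by
    intro f h
    rw [← sub_eq_zero]
    have sep : ∀ l : Module.Dual k X,
        l ((τ.hom.app Y f : G → (X : Type)) h - f (h * a)) = 0 := by
      intro l
      rw [map_sub]
      have hp := nat_apply τ (plHom k G l) f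
      have e2 := (phi_eval τ hτ ha ((plHom k G l).hom f) h).symm.trans (congrFun hp h)
      rw [sub_eq_zero]
      exact e2.symm
    exact (Module.forall_dual_apply_eq_zero_iff k _).mp sep
  have hnat := nat_apply τ u v
  have e1 := congrFun hnat 1
  have e2 : FDRep.ρ X (1 * a) v = FDRep.ρ X 1 (τ.hom.app X v) :=
    (hY (u.hom v) 1).symm.trans e1
  rw [one_mul, map_one] at e2
  exact e2.symm

lemma T_surjective (hτ : NatTrans.IsMonoidal τ.hom) : ∃ g : G, T k G g = τ := by
  obtain ⟨a, ha⟩ := exists_eval τ hτ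
  refine ⟨a, ?_⟩
  ext X v
  exact (key_eval τ hτ ha X v).symm

end Surjectivity

end TannakaAux

end TannakaAux

open TannakaAux in
/-- **Tannaka duality for finite groups.** -/
theorem tannaka_duality_finite_groups (k G : Type) [Field k] [Group G] [Finite G] :
    ∃ T : G →* Aut (Action.forget (FGModuleCat k) (MonCat.of G)),
      (∀ (g : G) (X : FDRep k G) (v : X), ((T g).hom.app X) v = X.ρ g v) ∧
      (∀ g : G, NatTrans.IsMonoidal (T g).hom) ∧
      Function.Injective T ∧
      (∀ τ : Aut (Action.forget (FGModuleCat k) (MonCat.of G)),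
        NatTrans.IsMonoidal τ.hom → ∃ g : G, T g = τ) := by
  exact ⟨T k G, fun g X v => T_apply g X v, fun g => T_isMonoidal g, T_injective,
    fun τ hτ => T_surjective τ hτ⟩
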